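/- In the LT one-step sampling model with t = 1, for every node v ∈ V the one-step activation probability satisfies ap(v) = q(v) + (1 − q(v)) · Σ_{u ∈ V, u ≠ v} q(u) · w(u,v). -/

import Mathlib

set_option autoImplicit false

open MeasureTheory ProbabilityTheory

/-- **One-step activation probability under the LT model.**
In the LT one-step sampling model with `t = 1` (seed indicators `X 0 u ∈ {0,1}` with
`P[X 0 u = 1] = q u`, thresholds `r 0 v` uniform on `[0,1]`, all mutually independent;
node `v` is one-step activated iff `X 0 v = 1` or `∑_{u ≠ v} w u v · X 0 u ≥ r 0 v`),
for every node `v`, `ap v = q v + (1 − q v) · ∑_{u ≠ v} q u · w u v`. -/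
theorem lt_ap_eq
    {V : Type*} [Fintype V] [DecidableEq V]
    {Ω : Type*} [MeasurableSpace Ω] (μ : Measure Ω) [IsProbabilityMeasure μ]
    (q : V → ℝ) (w : V → V → ℝ)
    (hq : ∀ u, q u ∈ Set.Icc (0 : ℝ) 1)
    (hw : ∀ u v, w u v ∈ Set.Icc (0 : ℝ) 1)
    (hwdiag : ∀ v, w v v = 0)
    (hwnorm : ∀ v, ∑ u, w u v ≤ 1)
    (X : Fin 1 → V → Ω → ℝ) (r : Fin 1 → V → Ω → ℝ)
    (hXmeas : ∀ i u, Measurable (X i u))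
    (hrmeas : ∀ i v, Measurable (r i v))
    (hX01 : ∀ i u ω, X i u ω = 0 ∨ X i u ω = 1)
    (hindep : iIndepFun (m := fun _ : (Fin 1 × V) ⊕ (Fin 1 × V) =>
        (inferInstance : MeasurableSpace ℝ))
      (Sum.elim (fun a => X a.1 a.2) (fun a => r a.1 a.2)) μ)
    (hX : ∀ i u, (μ {ω | X i u ω = 1}).toReal = q u)
    (hr : ∀ i v, Measure.map (r i v) μ = (volume : Measure ℝ).restrict (Set.Icc 0 1))
    (ap : V → ℝ)
    (hap : ∀ v, ap v = (μ {ω | X 0 v ω = 1 ∨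
        r 0 v ω ≤ ∑ u ∈ Finset.univ.erase v, w u v * X 0 u ω}).toReal) :
    ∀ v, ap v = q v + (1 - q v) * ∑ u ∈ Finset.univ.erase v, q u * w u v := by
  classical
  intro v
  set f : (Fin 1 × V) ⊕ (Fin 1 × V) → Ω → ℝ :=
    Sum.elim (fun a => X a.1 a.2) (fun a => r a.1 a.2) with hfdef
  have hfmeas : ∀ i, Measurable (f i) := by
    rintro (a | a)
    · exact hXmeas a.1 a.2
    · exact hrmeas a.1 a.2
  have hXnn : ∀ i u ω, (0:ℝ) ≤ X i u ω := by
    intro i u ω; rcases hX01 i u ω with h | h <;> simp [h]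
  -- the weighted sum
  set S : Ω → ℝ := fun ω => ∑ u ∈ Finset.univ.erase v, w u v * X 0 u ω with hSdef
  have hSmeas : Measurable S :=
    Finset.measurable_sum _ (fun u _ => (hXmeas 0 u).const_mul _)
  have hS0 : ∀ ω, (0:ℝ) ≤ S ω := fun ω =>
    Finset.sum_nonneg fun u _ => mul_nonneg (hw u v).1 (hXnn 0 u ω)
  have hS1 : ∀ ω, S ω ≤ 1 := by
    intro ω
    calc S ω ≤ ∑ u ∈ Finset.univ.erase v, w u v := by
          refine Finset.sum_le_sum fun u _ => ?_
          rcases hX01 0 u ω with h | h <;> simp [h, (hw u v).1, (hw u v).2]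
      _ ≤ ∑ u, w u v :=
          Finset.sum_le_sum_of_subset_of_nonneg (Finset.erase_subset _ _)
            (fun u _ _ => (hw u v).1)
      _ ≤ 1 := hwnorm v
  -- events
  set A : Set Ω := {ω | X 0 v ω = 1} with hAdef
  have hAmeas : MeasurableSet A := hXmeas 0 v (measurableSet_singleton 1)
  set B : Set Ω := {ω | r 0 v ω ≤ S ω} with hBdef
  have hBmeas : MeasurableSet B := measurableSet_le (hrmeas 0 v) hSmeas
  have hμA : μ A = ENNReal.ofReal (q v) := by
    rw [← hX 0 v, ENNReal.ofReal_toReal (measure_ne_top μ _)]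
  -- split the union
  have hsplit : μ (A ∪ B) = μ A + μ (B \ A) := by
    rw [← Set.union_diff_self]
    exact measure_union disjoint_sdiff_self_right (hBmeas.diff hAmeas)
  -- the auxiliary variable T
  set T : Ω → ℝ := fun ω => if X 0 v ω = 1 then (-1:ℝ) else S ω with hTdef
  have hTmeas : Measurable T :=
    Measurable.ite (hXmeas 0 v (measurableSet_singleton 1)) measurable_const hSmeas
  have hrneg : μ {ω | r 0 v ω ≤ -1} = 0 := by
    have h1 : μ {ω | r 0 v ω ≤ -1} = Measure.map (r 0 v) μ (Set.Iic (-1)) := by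
      rw [Measure.map_apply (hrmeas 0 v) measurableSet_Iic]; rfl
    rw [h1, hr 0 v, Measure.restrict_apply measurableSet_Iic]
    have : Set.Iic (-1:ℝ) ∩ Set.Icc 0 1 = ∅ := by
      ext x; simp only [Set.mem_inter_iff, Set.mem_Iic, Set.mem_Icc, Set.mem_empty_iff_false,
        iff_false, not_and]
      intro h1 h2; linarith
    rw [this, measure_empty]
  have hTB : μ {ω | r 0 v ω ≤ T ω} = μ (B \ A) := by
    apply le_antisymm
    · have hsub : {ω | r 0 v ω ≤ T ω} ⊆ (B \ A) ∪ {ω | r 0 v ω ≤ -1} := by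
        intro ω hω
        by_cases h : X 0 v ω = 1
        · right; simpa [hTdef, h] using hω
        · left; exact ⟨(by simpa [hTdef, h] using hω : r 0 v ω ≤ S ω), h⟩
      calc μ {ω | r 0 v ω ≤ T ω} ≤ μ ((B \ A) ∪ {ω | r 0 v ω ≤ -1}) := measure_mono hsub
        _ ≤ μ (B \ A) + μ {ω | r 0 v ω ≤ -1} := measure_union_le _ _
        _ = μ (B \ A) := by rw [hrneg, add_zero]
    · apply measure_mono
      rintro ω ⟨h1, h2⟩
      show r 0 v ω ≤ T ω
      rw [show T ω = S ω from if_neg h2]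
      exact h1
  -- independence of T and r 0 v
  set SL : Finset ((Fin 1 × V) ⊕ (Fin 1 × V)) := Finset.univ.image Sum.inl with hSLdef
  set SR : Finset ((Fin 1 × V) ⊕ (Fin 1 × V)) := {Sum.inr (0, v)} with hSRdef
  have hdisj : Disjoint SL SR := by
    rw [Finset.disjoint_left]
    intro a ha hb
    simp only [hSLdef, Finset.mem_image] at ha
    simp only [hSRdef, Finset.mem_singleton] at hb
    obtain ⟨x, -, hx⟩ := ha
    rw [hb] at hx
    exact Sum.inl_ne_inr hx
  have hIF := hindep.indepFun_finset SL SR hdisj hfmeas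
  have hvmem : (Sum.inl ((0 : Fin 1), v) : (Fin 1 × V) ⊕ (Fin 1 × V)) ∈ SL :=
    Finset.mem_image_of_mem _ (Finset.mem_univ _)
  have humem : ∀ u : V, (Sum.inl ((0 : Fin 1), u) : (Fin 1 × V) ⊕ (Fin 1 × V)) ∈ SL :=
    fun u => Finset.mem_image_of_mem _ (Finset.mem_univ _)
  set φ : (SL → ℝ) → ℝ := fun g =>
    if g ⟨Sum.inl (0, v), hvmem⟩ = 1 then -1
    else ∑ u ∈ Finset.univ.erase v, w u v * g ⟨Sum.inl (0, u), humem u⟩ with hφdef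
  have hφmeas : Measurable φ := by
    apply Measurable.ite
    · exact (measurable_pi_apply _) (measurableSet_singleton 1)
    · exact measurable_const
    · exact Finset.measurable_sum _ fun u _ => (measurable_pi_apply _).const_mul _
  have hTeq : T = φ ∘ (fun a (i : SL) => f i a) := by
    funext ω
    simp only [hTdef, hφdef, Function.comp_apply, hfdef, Sum.elim_inl, hSdef]
    by_cases h : X 0 v ω = 1 <;> simp [h]
  have hTr : IndepFun T (r 0 v) μ := by
    have hreq : r 0 v =
        (fun g : (SR → ℝ) => g ⟨Sum.inr (0, v), Finset.mem_singleton_self _⟩) ∘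
          (fun a (i : SR) => f i a) := rfl
    rw [hTeq, hreq]
    exact hIF.comp hφmeas (measurable_pi_apply _)
  -- compute μ (B \ A) as a lintegral
  have key : μ (B \ A) = ∫⁻ ω, ENNReal.ofReal (T ω) ∂μ := by
    rw [← hTB]
    have hset : MeasurableSet {p : ℝ × ℝ | p.2 ≤ p.1} :=
      measurableSet_le measurable_snd measurable_fst
    have h1 : μ {ω | r 0 v ω ≤ T ω} = μ.map (fun ω => (T ω, r 0 v ω)) {p | p.2 ≤ p.1} := by
      rw [Measure.map_apply (hTmeas.prodMk (hrmeas 0 v)) hset]; rfl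
    have hmapprod : μ.map (fun ω => (T ω, r 0 v ω)) = (μ.map T).prod (μ.map (r 0 v)) :=
      (indepFun_iff_map_prod_eq_prod_map_map hTmeas.aemeasurable
        (hrmeas 0 v).aemeasurable).mp hTr
    rw [h1, hmapprod, hr 0 v, Measure.prod_apply hset]
    have h2 : ∀ t : ℝ, (Prod.mk t ⁻¹' {p : ℝ × ℝ | p.2 ≤ p.1}) = Set.Iic t := by
      intro t; ext x; simp [Set.mem_Iic]
    simp_rw [h2]
    have hg : Measurable (fun t : ℝ => (volume.restrict (Set.Icc (0:ℝ) 1)) (Set.Iic t)) := by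
      apply Monotone.measurable
      intro a b hab
      exact measure_mono (Set.Iic_subset_Iic.mpr hab)
    rw [lintegral_map hg hTmeas]
    apply lintegral_congr
    intro ω
    rw [Measure.restrict_apply measurableSet_Iic]
    by_cases h : X 0 v ω = 1
    · have hT1 : T ω = -1 := if_pos h
      rw [hT1]
      have he : Set.Iic (-1:ℝ) ∩ Set.Icc 0 1 = ∅ := by
        ext x; simp only [Set.mem_inter_iff, Set.mem_Iic, Set.mem_Icc, Set.mem_empty_iff_false,
          iff_false, not_and]
        intro h1 h2; linarith
      rw [he, measure_empty]
      simp
    · have hT1 : T ω = S ω := if_neg h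
      rw [hT1]
      have h0 := hS0 ω
      have h1' := hS1 ω
      have he : Set.Iic (S ω) ∩ Set.Icc 0 1 = Set.Icc 0 (S ω) := by
        ext x
        simp only [Set.mem_inter_iff, Set.mem_Iic, Set.mem_Icc]
        constructor
        · rintro ⟨hx, hx0, hx1⟩; exact ⟨hx0, hx⟩
        · rintro ⟨hx0, hx⟩; exact ⟨hx, hx0, le_trans hx h1'⟩
      rw [he, Real.volume_Icc, sub_zero]
  -- rewrite the integrand as a sum
  have hpt : ∀ ω, ENNReal.ofReal (T ω) =
      ∑ u ∈ Finset.univ.erase v, ENNReal.ofReal (w u v) *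
        (if X 0 v ω = 1 then 0 else ENNReal.ofReal (X 0 u ω)) := by
    intro ω
    by_cases h : X 0 v ω = 1
    · simp [hTdef, h]
    · rw [show T ω = S ω from if_neg h]
      simp only [if_neg h, hSdef]
      rw [ENNReal.ofReal_sum_of_nonneg
        (fun u _ => mul_nonneg (hw u v).1 (hXnn 0 u ω))]
      exact Finset.sum_congr rfl fun u _ => ENNReal.ofReal_mul (hw u v).1
  have hint : ∫⁻ ω, ENNReal.ofReal (T ω) ∂μ =
      ∑ u ∈ Finset.univ.erase v, ENNReal.ofReal (w u v) *
        μ ({ω | ¬ X 0 v ω = 1} ∩ {ω | X 0 u ω = 1}) := by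
    have hmeas_inner : ∀ u : V,
        Measurable (fun ω => (if X 0 v ω = 1 then 0 else ENNReal.ofReal (X 0 u ω))) := by
      intro u
      exact Measurable.ite (hXmeas 0 v (measurableSet_singleton 1)) measurable_const
        (ENNReal.measurable_ofReal.comp (hXmeas 0 u))
    simp_rw [hpt]
    rw [lintegral_finset_sum _ (fun u _ => (hmeas_inner u).const_mul _)]
    refine Finset.sum_congr rfl fun u _ => ?_
    rw [lintegral_const_mul _ (hmeas_inner u)]
    congr 1
    have hind : ∀ ω, (if X 0 v ω = 1 then 0 else ENNReal.ofReal (X 0 u ω)) =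
        Set.indicator ({ω | ¬ X 0 v ω = 1} ∩ {ω | X 0 u ω = 1}) (fun _ => 1) ω := by
      intro ω
      rcases hX01 0 u ω with h | h <;> by_cases hv : X 0 v ω = 1 <;>
        simp [Set.indicator, h, hv]
    simp_rw [hind]
    have hCmeas : MeasurableSet ({ω | ¬ X 0 v ω = 1} ∩ {ω | X 0 u ω = 1}) :=
      (((hXmeas 0 v) (measurableSet_singleton 1)).compl).inter
        ((hXmeas 0 u) (measurableSet_singleton 1))
    rw [lintegral_indicator hCmeas, setLIntegral_one]
  -- independence of coordinates
  have hpair : ∀ u ∈ Finset.univ.erase v,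
      μ ({ω | ¬ X 0 v ω = 1} ∩ {ω | X 0 u ω = 1}) =
        (1 - ENNReal.ofReal (q v)) * ENNReal.ofReal (q u) := by
    intro u hu
    have huv : u ≠ v := Finset.ne_of_mem_erase hu
    have hne : (Sum.inl ((0 : Fin 1), v) : (Fin 1 × V) ⊕ (Fin 1 × V)) ≠ Sum.inl (0, u) := by
      intro hcon
      exact huv (congrArg Prod.snd (Sum.inl.inj hcon)).symm
    have hIuv : IndepFun (X 0 v) (X 0 u) μ := hindep.indepFun hne
    have h1 : μ (X 0 v ⁻¹' ({1}ᶜ) ∩ X 0 u ⁻¹' {1}) =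
        μ (X 0 v ⁻¹' ({1}ᶜ)) * μ (X 0 u ⁻¹' {1}) :=
      hIuv.measure_inter_preimage_eq_mul _ _ (measurableSet_singleton 1).compl
        (measurableSet_singleton 1)
    have h2 : μ (X 0 v ⁻¹' ({1}ᶜ)) = 1 - ENNReal.ofReal (q v) := by
      have : X 0 v ⁻¹' ({1}ᶜ) = Aᶜ := rfl
      rw [this, measure_compl hAmeas (measure_ne_top _ _), measure_univ, hμA]
    have h3 : μ (X 0 u ⁻¹' {1}) = ENNReal.ofReal (q u) := by
      rw [show X 0 u ⁻¹' {1} = {ω | X 0 u ω = 1} from rfl, ← hX 0 u,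
        ENNReal.ofReal_toReal (measure_ne_top μ _)]
    have h4 : {ω | ¬ X 0 v ω = 1} ∩ {ω | X 0 u ω = 1} =
        X 0 v ⁻¹' ({1}ᶜ) ∩ X 0 u ⁻¹' {1} := rfl
    rw [h4, h1, h2, h3]
  -- put everything together in ℝ≥0∞
  have hq0 := fun u => (hq u).1
  have hq1 := fun u => (hq u).2
  have htotal : μ (A ∪ B) = ENNReal.ofReal (q v) +
      ∑ u ∈ Finset.univ.erase v, ENNReal.ofReal (w u v) *
        ((1 - ENNReal.ofReal (q v)) * ENNReal.ofReal (q u)) := by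
    rw [hsplit, hμA, key, hint]
    congr 1
    exact Finset.sum_congr rfl fun u hu => by rw [hpair u hu]
  have hev : {ω | X 0 v ω = 1 ∨ r 0 v ω ≤ ∑ u ∈ Finset.univ.erase v, w u v * X 0 u ω}
      = A ∪ B := by
    ext ω; simp only [Set.mem_setOf_eq, Set.mem_union, hAdef, hBdef, hSdef]
  rw [hap v, hev, htotal]
  -- convert to reals
  have hqve : (1 - ENNReal.ofReal (q v)) = ENNReal.ofReal (1 - q v) := by
    rw [ENNReal.ofReal_sub _ (hq0 v), ENNReal.ofReal_one]
  rw [hqve]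
  have hterm : ∀ u : V, ENNReal.ofReal (w u v) *
      (ENNReal.ofReal (1 - q v) * ENNReal.ofReal (q u)) =
      ENNReal.ofReal (w u v * ((1 - q v) * q u)) := by
    intro u
    rw [ENNReal.ofReal_mul (hw u v).1, ENNReal.ofReal_mul (by linarith [hq1 v])]
  simp_rw [hterm]
  rw [← ENNReal.ofReal_sum_of_nonneg
    (fun u _ => mul_nonneg (hw u v).1 (mul_nonneg (by linarith [hq1 v]) (hq0 u))),
    ← ENNReal.ofReal_add (hq0 v)
      (Finset.sum_nonneg fun u _ =>
        mul_nonneg (hw u v).1 (mul_nonneg (by linarith [hq1 v]) (hq0 u))),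
    ENNReal.toReal_ofReal (add_nonneg (hq0 v)
      (Finset.sum_nonneg fun u _ =>
        mul_nonneg (hw u v).1 (mul_nonneg (by linarith [hq1 v]) (hq0 u))))]
  rw [Finset.mul_sum]
  congr 1
  exact Finset.sum_congr rfl fun u _ => by ring
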